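/- For every x, y ∈ [0,1) with x < y, there exists exactly one pair of dyadic intervals (I, J) with I ∼ J such that x ∈ I and y ∈ J. Equivalently, for all x < y in [0,1), the indicator 1_{{x<y}} satisfies 1 = Σ_{(I,J): I∼J} 1_I(x) 1_J(y), i.e. there exist unique integers j ≥ 2 and 0 ≤ k < m < 2^j with x ∈ [k·2^{−j}, (k+1)·2^{−j}), y ∈ [m·2^{−j}, (m+1)·2^{−j}), m ≥ k+2, and ⌊m/2⌋ = ⌊k/2⌋ + 1. -/

import Mathlib

open Set

private lemma floor_halve {t : ℝ} (j : ℕ) :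
    ⌊t * 2 ^ (j+1)⌋₊ / 2 = ⌊t * 2 ^ j⌋₊ := by
  have h : t * 2 ^ j = t * 2 ^ (j+1) / ((2:ℕ):ℝ) := by push_cast; ring
  rw [h, Nat.floor_div_natCast]

private lemma mem_dyadic_iff {t : ℝ} (ht : 0 ≤ t) (j k : ℕ) :
    t ∈ Ico ((k:ℝ)/2^j) (((k:ℝ)+1)/2^j) ↔ ⌊t * 2^j⌋₊ = k := by
  have hp : (0:ℝ) < 2^j := by positivity
  rw [mem_Ico, div_le_iff₀ hp, lt_div_iff₀ hp,
    Nat.floor_eq_iff (by positivity : (0:ℝ) ≤ t * 2^j)]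

/-- The Whitney-type decomposition of the triangle `{x < y}` in `[0,1)²` used in the proof
of the Christ–Kiselev Lemma 3.1 of Smith–Sogge: for `x < y` in `[0,1)` there exist unique
integers `j ≥ 2` and `0 ≤ k < m < 2^j` with `x ∈ [k·2^{-j}, (k+1)·2^{-j})`,
`y ∈ [m·2^{-j}, (m+1)·2^{-j})`, `m ≥ k+2`, and `⌊m/2⌋ = ⌊k/2⌋ + 1`. -/
theorem dyadic_whitney_decomposition :
    ∀ x y : ℝ, x ∈ Ico (0 : ℝ) 1 → y ∈ Ico (0 : ℝ) 1 → x < y →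
      ∃! jkm : ℕ × ℕ × ℕ,
        2 ≤ jkm.1 ∧
        jkm.2.1 < jkm.2.2 ∧
        jkm.2.2 < 2 ^ jkm.1 ∧
        jkm.2.1 + 2 ≤ jkm.2.2 ∧
        jkm.2.2 / 2 = jkm.2.1 / 2 + 1 ∧
        x ∈ Ico ((jkm.2.1 : ℝ) / 2 ^ jkm.1) (((jkm.2.1 : ℝ) + 1) / 2 ^ jkm.1) ∧
        y ∈ Ico ((jkm.2.2 : ℝ) / 2 ^ jkm.1) (((jkm.2.2 : ℝ) + 1) / 2 ^ jkm.1) := by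
  classical
  intro x y hx hy hxy
  obtain ⟨hx0, hx1⟩ := hx
  obtain ⟨hy0, hy1⟩ := hy
  set K : ℕ → ℕ := fun j => ⌊x * 2 ^ j⌋₊ with hKdef
  set M : ℕ → ℕ := fun j => ⌊y * 2 ^ j⌋₊ with hMdef
  have hKh : ∀ j, K (j+1) / 2 = K j := fun j => floor_halve j
  have hMh : ∀ j, M (j+1) / 2 = M j := fun j => floor_halve j
  have hKM : ∀ j, K j ≤ M j := fun j =>
    Nat.floor_le_floor (by nlinarith [pow_pos (by norm_num : (0:ℝ) < 2) j])
  have hMlt : ∀ j, M j < 2 ^ j := by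
    intro j
    have : y * 2 ^ j < ((2 ^ j : ℕ) : ℝ) := by push_cast; nlinarith [pow_pos (by norm_num : (0:ℝ) < 2) j]
    exact (Nat.floor_lt (by positivity)).mpr this
  -- existence of a level where the gap is ≥ 2
  have hex : ∃ j, K j + 2 ≤ M j := by
    obtain ⟨n, hn⟩ := pow_unbounded_of_one_lt (3/(y-x)) (by norm_num : (1:ℝ) < 2)
    refine ⟨n, ?_⟩
    have hd : (0:ℝ) < y - x := by linarith
    rw [div_lt_iff₀ hd] at hn
    have hKn : (K n : ℝ) ≤ x * 2^n := Nat.floor_le (by positivity)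
    have hMn : y * 2^n < (M n : ℝ) + 1 := Nat.lt_floor_add_one _
    have hlt : ((K n + 2 : ℕ) : ℝ) < ((M n + 1 : ℕ) : ℝ) := by push_cast; nlinarith
    have := Nat.cast_lt.mp hlt
    omega
  set j0 := Nat.find hex with hj0def
  have hPj0 : K j0 + 2 ≤ M j0 := Nat.find_spec hex
  have hj0ne : j0 ≠ 0 := by
    intro h
    have hK0 : K 0 = 0 := by
      have : ⌊x * 2 ^ (0:ℕ)⌋₊ = 0 := by
        rw [Nat.floor_eq_zero]; simpa using hx1
      simpa [hKdef] using this
    have hM0 : M 0 = 0 := by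
      have : ⌊y * 2 ^ (0:ℕ)⌋₊ = 0 := by
        rw [Nat.floor_eq_zero]; simpa using hy1
      simpa [hMdef] using this
    rw [h] at hPj0; omega
  obtain ⟨i, hi⟩ : ∃ i, j0 = i + 1 := ⟨j0 - 1, by omega⟩
  have hnotPi : ¬ (K i + 2 ≤ M i) := Nat.find_min hex (by omega)
  have hMi : M i = K i + 1 := by
    have h0 := hKM i
    have h1 := hKh i
    have h2 := hMh i
    rw [hi] at hPj0
    omega
  have hj0ge2 : 2 ≤ j0 := by
    have h1 := hMlt j0
    have h2 : 3 ≤ 2 ^ j0 := by omega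
    by_contra h
    have : 2 ^ j0 ≤ 2 ^ 1 := Nat.pow_le_pow_right (by norm_num) (by omega)
    simp at this; omega
  have hmono : ∀ a d, K a + 2 ≤ M a → K (a + d) + 2 ≤ M (a + d) := by
    intro a d hPa
    induction d with
    | zero => exact hPa
    | succ n ih =>
      have h1 := hKh (a + n)
      have h2 := hMh (a + n)
      have he : a + (n + 1) = (a + n) + 1 := rfl
      rw [he]
      omega
  refine ⟨(j0, K j0, M j0), ⟨hj0ge2, show K j0 < M j0 by omega, hMlt j0, hPj0, ?_, ?_, ?_⟩, ?_⟩
  · show M j0 / 2 = K j0 / 2 + 1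
    rw [hi]
    have h1 := hKh i
    have h2 := hMh i
    omega
  · exact (mem_dyadic_iff hx0 j0 (K j0)).mpr rfl
  · exact (mem_dyadic_iff (by linarith) j0 (M j0)).mpr rfl
  · rintro ⟨j, k, m⟩ ⟨hj2, hkm, hm2, hk2m, hdiv, hxmem, hymem⟩
    simp only at hj2 hkm hm2 hk2m hdiv hxmem hymem
    have hkK : K j = k := (mem_dyadic_iff hx0 j k).mp hxmem
    have hmM : M j = m := (mem_dyadic_iff (by linarith) j m).mp hymem
    obtain ⟨i', hi'⟩ : ∃ i', j = i' + 1 := ⟨j - 1, by omega⟩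
    have hMi' : M i' = K i' + 1 := by
      have h1 := hKh i'
      have h2 := hMh i'
      rw [hi'] at hkK hmM
      omega
    have hj0le : j0 ≤ j := Nat.find_min' hex (by omega)
    have hjle : j ≤ j0 := by
      by_contra h
      have h3 := hmono j0 (i' - j0) hPj0
      rw [show j0 + (i' - j0) = i' from by omega] at h3
      omega
    have hjj : j = j0 := le_antisymm hjle hj0le
    rw [← hkK, ← hmM, hjj]
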